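/- arXiv:1902.07765 — 5 statements merged into one kernel-verified Lean document; each statement's English description precedes it below -/
import Mathlib

section
/- Let {S(t)}_{t≥0} be a multivalued eventual semiflow on X. Assume that {S(t)} is (X,Y)-dissipative with bounded set B₀ ∈ B(Y) and that {S(t)} is Y-asymptotically compact on B₀. Then the ω-limit set ω_Y(B₀) is a compact subset of Y. -/
open Set Filter Topology Bornology ENNReal

/-- The image of a set `B` under the multivalued map `S t`:
`S(t)B = ⋃_{v ∈ B} S(t)v`. -/
def mImage {X : Type*} (S : ℝ → X → Set X) (t : ℝ) (B : Set X) : Set X :=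
  ⋃ v ∈ B, S t v

/-- `S` is a multivalued eventual semiflow on the metric space `X`:
the values `S t v` (for `t ≥ 0`) are nonempty, `S 0 v = {v}`, and for every
nonempty bounded `B ⊆ X` there is `t₁(B) ≥ 0` such that
`S(s+t)B ⊆ S(s)S(t)B` for all `t ≥ t₁(B)`, `s ≥ 0`. -/
def IsEventualSemiflow {X : Type*} [MetricSpace X] (S : ℝ → X → Set X) : Prop :=
  (∀ t : ℝ, 0 ≤ t → ∀ v : X, (S t v).Nonempty) ∧
  (∀ v : X, S 0 v = {v}) ∧
  (∀ B : Set X, B.Nonempty → IsBounded B →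
    ∃ t₁ : ℝ, 0 ≤ t₁ ∧ ∀ t ≥ t₁, ∀ s ≥ (0 : ℝ),
      mImage S (s + t) B ⊆ mImage S s (mImage S t B))

/-- `(X,Y)`-dissipativity: `ι : Y → X` is the (continuous, injective) identification of
`Y` with a subset of `X`, and `B₀ ⊆ Y` is such that every nonempty bounded `B ⊆ X` is
eventually absorbed: there is `t₀(B) ≥ 0` with `S(t)B ⊆ ι''B₀` for all `t ≥ t₀(B)`. -/
def IsDissipativeInto {X Y : Type*} [MetricSpace X] [MetricSpace Y]
    (S : ℝ → X → Set X) (ι : Y → X) (B₀ : Set Y) : Prop :=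
  ∀ B : Set X, B.Nonempty → IsBounded B →
    ∃ t₀ : ℝ, 0 ≤ t₀ ∧ ∀ t ≥ t₀, mImage S t B ⊆ ι '' B₀

/-- `Y`-asymptotic compactness on `B₀`: whenever `tₙ → ∞` and `vₙ ∈ S(tₙ)B₀`, the
sequence `(vₙ)` has a subsequence which lies in `Y` and converges in `Y`. -/
def IsAsympCompactOn {X Y : Type*} [MetricSpace X] [MetricSpace Y]
    (S : ℝ → X → Set X) (ι : Y → X) (B₀ : Set Y) : Prop :=
  ∀ t : ℕ → ℝ, Tendsto t atTop atTop →
    ∀ v : ℕ → X, (∀ n, v n ∈ mImage S (t n) (ι '' B₀)) →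
      ∃ φ : ℕ → ℕ, StrictMono φ ∧ ∃ w : ℕ → Y, (∀ k, ι (w k) = v (φ k)) ∧
        ∃ y : Y, Tendsto w atTop (𝓝 y)

/-- The Hausdorff semidistance, measured in the metric of `Y`, from a set `C ⊆ X`
to a set `A ⊆ Y`.  A point `x ∈ C` which does not lie in (the image of) `Y`
contributes `∞`. -/
noncomputable def eSemidistY {X Y : Type*} [MetricSpace Y]
    (ι : Y → X) (C : Set X) (A : Set Y) : ℝ≥0∞ :=
  ⨆ x ∈ C, ⨅ y ∈ ι ⁻¹' {x}, EMetric.infEdist y A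

/-- `A ⊆ Y` attracts `B ⊆ X` : `dist_Y(S(t)B, A) → 0` as `t → ∞`. -/
def AttractsY {X Y : Type*} [MetricSpace X] [MetricSpace Y]
    (S : ℝ → X → Set X) (ι : Y → X) (A : Set Y) (B : Set X) : Prop :=
  Tendsto (fun t : ℝ => eSemidistY ι (mImage S t B) A) atTop (𝓝 0)

/-- `A ⊆ Y` is an `(X,Y)`-global attractor for `S`: it is nonempty, bounded and
compact in `Y`, it attracts every nonempty bounded subset of `X`, and it is
contained in every closed (in `Y`) set with this attraction property. -/
def IsGlobalAttractorXY {X Y : Type*} [MetricSpace X] [MetricSpace Y]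
    (S : ℝ → X → Set X) (ι : Y → X) (A : Set Y) : Prop :=
  A.Nonempty ∧ IsBounded A ∧ IsCompact A ∧
  (∀ B : Set X, B.Nonempty → IsBounded B → AttractsY S ι A B) ∧
  (∀ C : Set Y, IsClosed C →
    (∀ B : Set X, B.Nonempty → IsBounded B → AttractsY S ι C B) → A ⊆ C)

/-- The `ω`-limit set in `Y` of a set `B ⊆ X`, relative to a time `t₀ = t₀(B)`
after which `S(t)B ⊆ Y`: `ω_Y(B) = ⋂_{s ≥ t₀} cl_Y ( ⋃_{t ≥ s} S(t)B )`. -/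
def omegaY {X Y : Type*} [MetricSpace Y]
    (S : ℝ → X → Set X) (ι : Y → X) (B : Set X) (t₀ : ℝ) : Set Y :=
  ⋂ s ∈ Set.Ici t₀, closure (ι ⁻¹' (⋃ t ∈ Set.Ici s, mImage S t B))

/-- An eternal trajectory of the multivalued semiflow `S`:
`u(s) ∈ S(s - t)u(t)` for all `t ∈ ℝ`, `s > t`. -/
def IsEternalTrajectory {X : Type*} (S : ℝ → X → Set X) (u : ℝ → X) : Prop :=
  ∀ t s : ℝ, t < s → u s ∈ S (s - t) (u t)

/-- **ω_Y(B₀) is compact in Y** for a dissipative, asymptotically compact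
multivalued eventual semiflow. -/
theorem omega_compact
    {X Y : Type*} [MetricSpace X] [MetricSpace Y]
    (ι : Y → X) (hι_cont : Continuous ι) (hι_inj : Function.Injective ι)
    (S : ℝ → X → Set X) (hS : IsEventualSemiflow S)
    (B₀ : Set Y) (hB₀ne : B₀.Nonempty) (hB₀bdd : IsBounded B₀)
    (hdiss : IsDissipativeInto S ι B₀)
    (hcomp : IsAsympCompactOn S ι B₀)
    (t₀ : ℝ) (ht₀ : 0 ≤ t₀)
    (ht₀Y : ∀ t ≥ t₀, mImage S t (ι '' B₀) ⊆ Set.range ι) :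
    IsCompact (omegaY S ι (ι '' B₀) t₀) := by
  have hclosed : IsClosed (omegaY S ι (ι '' B₀) t₀) :=
    isClosed_biInter fun s _ => isClosed_closure
  rw [isCompact_iff_isSeqCompact]
  intro y hy
  have hz : ∀ n : ℕ, ∃ z : Y,
      z ∈ ι ⁻¹' (⋃ t ∈ Set.Ici (t₀ + n), mImage S t (ι '' B₀)) ∧
      dist (y n) z < 1 / (n + 1) := by
    intro n
    have h1 : y n ∈ closure (ι ⁻¹' (⋃ t ∈ Set.Ici (t₀ + n), mImage S t (ι '' B₀))) := by
      have h := hy n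
      simp only [omegaY, Set.mem_iInter] at h
      exact h (t₀ + n) (show t₀ ≤ t₀ + n from le_add_of_nonneg_right n.cast_nonneg)
    rcases Metric.mem_closure_iff.mp h1 (1 / (n + 1)) (by positivity) with ⟨z, hz1, hz2⟩
    exact ⟨z, hz1, hz2⟩
  choose z hz1 hz2 using hz
  have ht : ∀ n : ℕ, ∃ t, t₀ + n ≤ t ∧ ι (z n) ∈ mImage S t (ι '' B₀) := by
    intro n
    have h := hz1 n
    simp only [Set.mem_preimage, Set.mem_iUnion, Set.mem_Ici] at h
    tauto
  choose t ht1 ht2 using ht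
  have htend : Tendsto t atTop atTop :=
    tendsto_atTop_mono (fun n => le_trans (le_add_of_nonneg_left ht₀) (ht1 n))
      tendsto_natCast_atTop_atTop
  rcases hcomp t htend (fun n => ι (z n)) ht2 with ⟨φ, hφ, w, hw, yLim, hwy⟩
  have hzw : ∀ k, w k = z (φ k) := fun k => hι_inj (hw k)
  have hzconv : Tendsto (fun k => z (φ k)) atTop (𝓝 yLim) := by
    refine hwy.congr fun k => ?_
    exact hzw k
  have hconv : Tendsto (fun k => y (φ k)) atTop (𝓝 yLim) := by
    rw [tendsto_iff_dist_tendsto_zero]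
    have hbound : ∀ k, dist (y (φ k)) yLim ≤ 1 / (φ k + 1) + dist (z (φ k)) yLim := fun k =>
      (dist_triangle (y (φ k)) (z (φ k)) yLim).trans
        (add_le_add_left (le_of_lt (hz2 (φ k))) _)
    refine squeeze_zero (fun k => dist_nonneg) hbound ?_
    have h1 : Tendsto (fun k : ℕ => (1 : ℝ) / (φ k + 1)) atTop (𝓝 0) :=
      tendsto_one_div_add_atTop_nhds_zero_nat.comp hφ.tendsto_atTop
    have h2 : Tendsto (fun k => dist (z (φ k)) yLim) atTop (𝓝 0) :=
      tendsto_iff_dist_tendsto_zero.mp hzconv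
    simpa using h1.add h2
  exact ⟨yLim, hclosed.mem_of_tendsto hconv (Filter.Eventually.of_forall fun k => hy (φ k)),
    φ, hφ, hconv⟩
end

section
/- Let {S(t)}_{t≥0} be a multivalued eventual semiflow on X. Assume that {S(t)} is (X,Y)-dissipative with bounded set B₀ ∈ B(Y) and that {S(t)} is Y-asymptotically compact on B₀. Then ω_Y(B₀) attracts all bounded subsets of X: for every B ∈ B(X), lim_{t→∞} dist_Y(S(t)B, ω_Y(B₀)) = 0. -/
open Set Filter Topology Bornology ENNReal

/-- **ω_Y(B₀) attracts all bounded subsets of X**: for every nonempty bounded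
`B ⊆ X`, `dist_Y(S(t)B, ω_Y(B₀)) → 0` as `t → ∞`. -/
theorem omega_attracts
    {X Y : Type*} [MetricSpace X] [MetricSpace Y]
    (ι : Y → X) (hι_cont : Continuous ι) (hι_inj : Function.Injective ι)
    (S : ℝ → X → Set X) (hS : IsEventualSemiflow S)
    (B₀ : Set Y) (hB₀ne : B₀.Nonempty) (hB₀bdd : IsBounded B₀)
    (hdiss : IsDissipativeInto S ι B₀)
    (hcomp : IsAsympCompactOn S ι B₀)
    (t₀ : ℝ) (ht₀ : 0 ≤ t₀)
    (ht₀Y : ∀ t ≥ t₀, mImage S t (ι '' B₀) ⊆ Set.range ι) :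
    ∀ B : Set X, B.Nonempty → IsBounded B →
      AttractsY S ι (omegaY S ι (ι '' B₀) t₀) B := by
  intro B hBne hBbdd
  set ω := omegaY S ι (ι '' B₀) t₀ with hω
  rw [AttractsY, ENNReal.tendsto_nhds_zero]
  by_contra h
  push_neg at h
  obtain ⟨ε, hε, hfreq⟩ := h
  simp only [← not_le] at hfreq
  rw [Filter.frequently_atTop] at hfreq
  -- a small positive threshold δ < ε, finite
  set δ : ℝ≥0∞ := min ε 1 / 2 with hδ
  have hδ0 : 0 < δ := ENNReal.half_pos (by simp [lt_min_iff, hε, zero_lt_one] : (0:ℝ≥0∞) < min ε 1).ne'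
  have hδε : δ < ε := lt_of_lt_of_le (ENNReal.half_lt_self (by simp [lt_min_iff, hε, zero_lt_one] : (0:ℝ≥0∞) < min ε 1).ne' (by exact ne_top_of_le_ne_top one_ne_top (min_le_right _ _))) (min_le_left _ _)
  obtain ⟨t₁, ht₁0, hsemi⟩ := hS.2.2 B hBne hBbdd
  obtain ⟨t₂, ht₂0, habs⟩ := hdiss B hBne hBbdd
  set τ := max t₁ t₂ with hτ
  have hτ0 : 0 ≤ τ := le_trans ht₁0 (le_max_left _ _)
  -- extract times and bad points
  have key : ∀ n : ℕ, ∃ q : ℝ × X, q.1 ≥ (n : ℝ) + τ ∧ q.2 ∈ mImage S q.1 B ∧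
      δ < ⨅ y ∈ ι ⁻¹' {q.2}, EMetric.infEdist y ω := by
    intro n
    obtain ⟨t, ht, hft⟩ := hfreq ((n : ℝ) + τ)
    have hlt : δ < eSemidistY ι (mImage S t B) ω :=
      lt_of_lt_of_le hδε (not_le.mp hft).le
    rw [eSemidistY, lt_iSup_iff] at hlt
    obtain ⟨x, hx⟩ := hlt
    rw [lt_iSup_iff] at hx
    obtain ⟨hxC, hx⟩ := hx
    exact ⟨(t, x), ht, hxC, hx⟩
  choose q hq1 hq2 hq3 using key
  set tn : ℕ → ℝ := fun n => (q n).1 with htn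
  set xn : ℕ → X := fun n => (q n).2 with hxn
  set sn : ℕ → ℝ := fun n => tn n - τ with hsn
  have hsn_ge : ∀ n : ℕ, (n : ℝ) ≤ sn n := fun n => by
    have := hq1 n; simp only [hsn]; linarith
  have hsn_tendsto : Tendsto sn atTop atTop :=
    tendsto_atTop_mono hsn_ge tendsto_natCast_atTop_atTop
  -- xn n ∈ S(sn n)(ι '' B₀)
  have hmem : ∀ n : ℕ, xn n ∈ mImage S (sn n) (ι '' B₀) := by
    intro n
    have h1 : mImage S (sn n + τ) B ⊆ mImage S (sn n) (mImage S τ B) :=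
      hsemi τ (le_max_left _ _) (sn n) (le_trans (Nat.cast_nonneg n) (hsn_ge n))
    have h2 : mImage S τ B ⊆ ι '' B₀ := habs τ (le_max_right _ _)
    have h3 : mImage S (sn n) (mImage S τ B) ⊆ mImage S (sn n) (ι '' B₀) :=
      Set.biUnion_subset_biUnion_left h2
    have hx : xn n ∈ mImage S (sn n + τ) B := by
      have : sn n + τ = tn n := by simp [hsn]
      rw [this]; exact hq2 n
    exact h3 (h1 hx)
  obtain ⟨φ, hφ, w, hw, y, hy⟩ := hcomp sn hsn_tendsto xn hmem
  -- y belongs to the omega-limit set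
  have hyω : y ∈ ω := by
    rw [hω, omegaY]
    simp only [Set.mem_iInter, Set.mem_Ici]
    intro s hs
    refine mem_closure_of_tendsto hy ?_
    filter_upwards [eventually_ge_atTop ⌈s⌉₊] with k hk
    have hks : s ≤ (k : ℝ) := le_trans (Nat.le_ceil s) (Nat.cast_le.mpr hk)
    have hkφ : (k : ℝ) ≤ sn (φ k) := le_trans (Nat.cast_le.mpr (hφ.id_le k)) (hsn_ge (φ k))
    simp only [Set.mem_preimage, hw k]
    exact Set.mem_biUnion (le_trans hks hkφ) (hmem (φ k))
  -- yet infEdist (w k) ω > δ for all k, contradicting w k → y ∈ ω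
  have hlim : Tendsto (fun k => EMetric.infEdist (w k) ω) atTop (𝓝 0) := by
    have h0 : EMetric.infEdist y ω = 0 := EMetric.infEdist_zero_of_mem hyω
    have := (EMetric.continuous_infEdist (s := ω)).continuousAt.tendsto.comp hy
    rwa [show Metric.infEDist y ω = 0 from h0] at this
  have hev : ∀ᶠ k in atTop, EMetric.infEdist (w k) ω < δ :=
    hlim.eventually (gt_mem_nhds hδ0)
  obtain ⟨k, hk⟩ := hev.exists
  have hwk : w k ∈ ι ⁻¹' {xn (φ k)} := by simp [hw k]
  have : δ < EMetric.infEdist (w k) ω :=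
    lt_of_lt_of_le (hq3 (φ k)) (iInf₂_le (w k) hwk)
  exact absurd hk (not_lt.mpr this.le)
end

section
/- Let {S(t)}_{t≥0} be a multivalued eventual semiflow on X which is (X,Y)-dissipative with bounded set B₀ ∈ B(Y) and Y-asymptotically compact on B₀, and let A be its (X,Y)-global attractor. Assume in addition that for every t ≥ 0 the restriction S(t)|_Y is single-valued with S(t)Y ⊂ Y, the family {S(t)|_Y}_{t≥0} is a semigroup on Y, and each S(t)|_Y : Y → Y is continuous. Then the attractor A is invariant: S(t)A = A for every t ≥ 0. -/
open Set Filter Topology Bornology ENNReal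

/-- Auxiliary: the multivalued image of `ι '' D` is `ι '' (T t '' D)`. -/
lemma mImage_image_aux {X Y : Type*} (ι : Y → X) (S : ℝ → X → Set X)
    (Tt : Y → Y) (t : ℝ) (hty : ∀ y : Y, S t (ι y) = {ι (Tt y)}) (D : Set Y) :
    mImage S t (ι '' D) = ι '' (Tt '' D) := by
  ext x
  simp only [mImage, mem_iUnion, Set.mem_image, exists_prop]
  constructor
  · rintro ⟨v, ⟨d, hd, rfl⟩, hx⟩
    rw [hty d] at hx
    exact ⟨Tt d, ⟨d, hd, rfl⟩, hx.symm⟩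
  · rintro ⟨_, ⟨d, hd, rfl⟩, rfl⟩
    exact ⟨ι d, ⟨d, hd, rfl⟩, by rw [hty d]; rfl⟩

/-- Auxiliary: `eSemidistY` of an image set. -/
lemma eSemidistY_image_aux {X Y : Type*} [MetricSpace Y] (ι : Y → X)
    (hι_inj : Function.Injective ι) (D : Set Y) (A : Set Y) :
    eSemidistY ι (ι '' D) A = ⨆ y ∈ D, EMetric.infEdist y A := by
  rw [eSemidistY, iSup_image]
  refine iSup_congr fun d => iSup_congr fun _ => ?_
  have h : ι ⁻¹' {ι d} = {d} := by
    ext y; simp [hι_inj.eq_iff]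
  rw [h]
  simp

/-- Auxiliary: monotonicity of `eSemidistY` in the first set argument. -/
lemma eSemidistY_mono_aux {X Y : Type*} [MetricSpace Y] (ι : Y → X)
    {C C' : Set X} (h : C ⊆ C') (A : Set Y) :
    eSemidistY ι C A ≤ eSemidistY ι C' A :=
  biSup_mono h

/-- **Invariance of the global attractor.**  If, in addition, for every `t ≥ 0` the
restriction of `S(t)` to `Y` is single-valued (given by a map `T t : Y → Y`),
the family `{T t}` is a semigroup on `Y`, and each `T t` is continuous, then the
`(X,Y)`-global attractor `𝓐` is invariant: `S(t)𝓐 = 𝓐` for every `t ≥ 0`. -/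
theorem attractor_invariance
    {X Y : Type*} [MetricSpace X] [MetricSpace Y]
    (ι : Y → X) (hι_cont : Continuous ι) (hι_inj : Function.Injective ι)
    (S : ℝ → X → Set X) (hS : IsEventualSemiflow S)
    (B₀ : Set Y) (hB₀ne : B₀.Nonempty) (hB₀bdd : IsBounded B₀)
    (hdiss : IsDissipativeInto S ι B₀)
    (hcomp : IsAsympCompactOn S ι B₀)
    (A : Set Y) (hA : IsGlobalAttractorXY S ι A)
    (T : ℝ → Y → Y)
    (hT : ∀ t ≥ (0 : ℝ), ∀ y : Y, S t (ι y) = {ι (T t y)})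
    (hTsemi : ∀ t ≥ (0 : ℝ), ∀ s ≥ (0 : ℝ), ∀ y : Y, T (t + s) y = T t (T s y))
    (hTcont : ∀ t ≥ (0 : ℝ), Continuous (T t)) :
    ∀ t ≥ (0 : ℝ), mImage S t (ι '' A) = ι '' A := by
  obtain ⟨hAne, hAbdd, hAcomp, hattract, hmin⟩ := hA
  -- uniform continuity of T t near the compact set A
  have hunif : ∀ t ≥ (0 : ℝ), ∀ ε : ℝ≥0∞, 0 < ε → ∃ δ : ℝ≥0∞, 0 < δ ∧
      ∀ y : Y, EMetric.infEdist y A < δ →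
        EMetric.infEdist (T t y) (T t '' A) < ε := by
    intro t ht ε hε
    have hUopen : IsOpen {y : Y | EMetric.infEdist (T t y) (T t '' A) < ε} := by
      have hc : Continuous fun y : Y => EMetric.infEdist (T t y) (T t '' A) :=
        EMetric.continuous_infEdist.comp (hTcont t ht)
      exact hc.isOpen_preimage (Set.Iio ε) isOpen_Iio
    have hAU : A ⊆ {y : Y | EMetric.infEdist (T t y) (T t '' A) < ε} := by
      intro a ha
      simp only [Set.mem_setOf_eq]
      rw [show EMetric.infEdist (T t a) (T t '' A) = 0 from
        EMetric.infEdist_zero_of_mem (mem_image_of_mem _ ha)]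
      exact hε
    obtain ⟨δ, hδ, hsub⟩ := hAcomp.exists_thickening_subset_open hUopen hAU
    refine ⟨ENNReal.ofReal δ, ENNReal.ofReal_pos.2 hδ, fun y hy => ?_⟩
    exact hsub (Metric.mem_thickening_iff_infEdist_lt.2 hy)
  -- Claim 1: `A ⊆ T t '' A` for every `t ≥ 0`.
  have key : ∀ t ≥ (0 : ℝ), A ⊆ T t '' A := by
    intro t ht
    refine hmin (T t '' A) (hAcomp.image (hTcont t ht)).isClosed ?_
    intro B hBne hBbdd
    rw [AttractsY, ENNReal.tendsto_nhds_zero]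
    intro ε hε
    obtain ⟨δ, hδ, hδ'⟩ := hunif t ht ε hε
    obtain ⟨t₁, ht₁, hsemi⟩ := hS.2.2 B hBne hBbdd
    obtain ⟨t₀, ht₀, habs⟩ := hdiss B hBne hBbdd
    have hattr := hattract B hBne hBbdd
    have hev : ∀ᶠ τ : ℝ in atTop, eSemidistY ι (mImage S (τ - t) B) A < δ := by
      have hshift : Tendsto (fun τ : ℝ => τ - t) atTop atTop :=
        tendsto_atTop_add_const_right atTop (-t) tendsto_id
      exact (hattr.comp hshift).eventually (gt_mem_nhds hδ)
    filter_upwards [hev, eventually_ge_atTop (t + max t₀ t₁)] with τ h1 h2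
    have hst₀ : t₀ ≤ τ - t := le_trans (le_max_left _ _) (by linarith)
    have hst₁ : t₁ ≤ τ - t := le_trans (le_max_right _ _) (by linarith)
    have hsub1 : mImage S τ B ⊆ mImage S t (mImage S (τ - t) B) := by
      have h := hsemi (τ - t) hst₁ t ht
      rwa [add_sub_cancel] at h
    have hrange : mImage S (τ - t) B ⊆ Set.range ι :=
      (habs (τ - t) hst₀).trans (image_subset_range ι B₀)
    have hDeq : ι '' (ι ⁻¹' mImage S (τ - t) B) = mImage S (τ - t) B :=
      Set.image_preimage_eq_of_subset hrange
    set D := ι ⁻¹' mImage S (τ - t) B with hD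
    have h3 : mImage S t (mImage S (τ - t) B) = ι '' (T t '' D) := by
      rw [← hDeq, mImage_image_aux ι S (T t) t (hT t ht)]
    have hδD : ∀ y ∈ D, EMetric.infEdist y A < δ := by
      intro y hy
      have hle : EMetric.infEdist y A ≤ eSemidistY ι (mImage S (τ - t) B) A := by
        rw [← hDeq, eSemidistY_image_aux ι hι_inj]
        exact le_iSup₂ (f := fun y (_ : y ∈ D) => EMetric.infEdist y A) y hy
      exact hle.trans_lt h1
    calc eSemidistY ι (mImage S τ B) (T t '' A)
        ≤ eSemidistY ι (ι '' (T t '' D)) (T t '' A) :=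
          eSemidistY_mono_aux ι (h3 ▸ hsub1) _
      _ = ⨆ y ∈ T t '' D, EMetric.infEdist y (T t '' A) :=
          eSemidistY_image_aux ι hι_inj _ _
      _ ≤ ε := by
          rw [iSup_image]
          exact iSup₂_le fun y hy => (hδ' y (hδD y hy)).le
  -- Claim 2: `T t '' A ⊆ A` for every `t ≥ 0`.
  have key2 : ∀ t ≥ (0 : ℝ), T t '' A ⊆ A := by
    intro t ht
    rintro _ ⟨a, ha, rfl⟩
    have hBne : (ι '' A).Nonempty := hAne.image ι
    have hBbdd : IsBounded (ι '' A) := (hAcomp.image hι_cont).isBounded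
    have hattr := hattract _ hBne hBbdd
    have hτ : Tendsto (fun n : ℕ => t + (n : ℝ)) atTop atTop :=
      tendsto_atTop_add_const_left _ t tendsto_natCast_atTop_atTop
    have hcomp0 : Tendsto (fun n : ℕ =>
        eSemidistY ι (mImage S (t + (n : ℝ)) (ι '' A)) A) atTop (𝓝 0) :=
      hattr.comp hτ
    have hle : ∀ n : ℕ, EMetric.infEdist (T t a) A ≤
        eSemidistY ι (mImage S (t + (n : ℝ)) (ι '' A)) A := by
      intro n
      have hn0 : (0 : ℝ) ≤ (n : ℝ) := n.cast_nonneg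
      obtain ⟨b, hb, hba⟩ := key (n : ℝ) hn0 ha
      have hmem : T t a ∈ T (t + (n : ℝ)) '' A :=
        ⟨b, hb, by rw [hTsemi t ht (n : ℝ) hn0 b, hba]⟩
      have htn0 : (0 : ℝ) ≤ t + (n : ℝ) := by linarith
      rw [mImage_image_aux ι S (T (t + (n : ℝ))) (t + (n : ℝ)) (hT _ htn0),
        eSemidistY_image_aux ι hι_inj]
      exact le_iSup₂ (f := fun y (_ : y ∈ T (t + (n : ℝ)) '' A) =>
        EMetric.infEdist y A) (T t a) hmem
    have h0 : EMetric.infEdist (T t a) A ≤ 0 := ge_of_tendsto' hcomp0 hle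
    have : T t a ∈ closure A :=
      EMetric.mem_closure_iff_infEdist_zero.2 (le_antisymm h0 zero_le)
    rwa [hAcomp.isClosed.closure_eq] at this
  intro t ht
  have hTA : T t '' A = A := Subset.antisymm (key2 t ht) (key t ht)
  rw [mImage_image_aux ι S (T t) t (hT t ht), hTA]
end

section
/- Let {S(t)}_{t≥0} be a multivalued eventual semiflow on X which is (X,Y)-dissipative with bounded set B₀ ∈ B(Y) and Y-asymptotically compact on B₀, and let A be its (X,Y)-global attractor. Assume in addition that for every t ≥ 0 the restriction S(t)|_Y is single-valued with S(t)Y ⊂ Y, the family {S(t)|_Y}_{t≥0} is a semigroup on Y, and each S(t)|_Y : Y → Y is continuous. Then for every v ∈ A and every t ∈ ℝ there exists an eternal Y-bounded (hence also X-bounded) trajectory u : ℝ → Y such that u(t) = v and u(s) ∈ A for every s ∈ ℝ. -/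
open Set Filter Topology Bornology ENNReal

/-- **Eternal trajectories through points of the attractor.**  Under the assumptions of
the invariance theorem, for every `v ∈ 𝓐` and every `t ∈ ℝ` there is an eternal
`Y`-bounded (hence also `X`-bounded) trajectory `u : ℝ → Y` with `u(t) = v` and
`u(s) ∈ 𝓐` for all `s ∈ ℝ`. -/
theorem eternal_trajectory_through_attractor
    {X Y : Type*} [MetricSpace X] [MetricSpace Y]
    (ι : Y → X) (hι_cont : Continuous ι) (hι_inj : Function.Injective ι)
    (S : ℝ → X → Set X) (hS : IsEventualSemiflow S)
    (B₀ : Set Y) (hB₀ne : B₀.Nonempty) (hB₀bdd : IsBounded B₀)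
    (hdiss : IsDissipativeInto S ι B₀)
    (hcomp : IsAsympCompactOn S ι B₀)
    (A : Set Y) (hA : IsGlobalAttractorXY S ι A)
    (T : ℝ → Y → Y)
    (hT : ∀ t ≥ (0 : ℝ), ∀ y : Y, S t (ι y) = {ι (T t y)})
    (hTsemi : ∀ t ≥ (0 : ℝ), ∀ s ≥ (0 : ℝ), ∀ y : Y, T (t + s) y = T t (T s y))
    (hTcont : ∀ t ≥ (0 : ℝ), Continuous (T t)) :
    ∀ v ∈ A, ∀ t : ℝ, ∃ u : ℝ → Y,
      IsEternalTrajectory S (ι ∘ u) ∧ u t = v ∧ (∀ s : ℝ, u s ∈ A) ∧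
      IsBounded (Set.range u) ∧ IsBounded (Set.range (ι ∘ u)) := by
  obtain ⟨hAne, hAbdd, hAcomp, hAatt, hAmin⟩ := hA
  -- `T 0` is the identity
  have hT0 : ∀ y : Y, T 0 y = y := by
    intro y
    have h1 := hT 0 le_rfl y
    rw [hS.2.1 (ι y)] at h1
    exact (hι_inj (Set.singleton_eq_singleton_iff.mp h1)).symm
  -- uniform continuity of `T t₀` near the compact set `A`
  have hucont : ∀ t₀ : ℝ, 0 ≤ t₀ → ∀ ε : ℝ≥0∞, 0 < ε →
      ∃ δ : ℝ≥0∞, 0 < δ ∧ ∀ y : Y, EMetric.infEdist y A < δ →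
        EMetric.infEdist (T t₀ y) (T t₀ '' A) < ε := by
    intro t₀ ht₀ ε hε
    have hUopen : IsOpen {y : Y | EMetric.infEdist (T t₀ y) (T t₀ '' A) < ε} := by
      have hc : Continuous fun y : Y => EMetric.infEdist (T t₀ y) (T t₀ '' A) :=
        EMetric.continuous_infEdist.comp (hTcont t₀ ht₀)
      exact isOpen_Iio.preimage hc
    have hAU : A ⊆ {y : Y | EMetric.infEdist (T t₀ y) (T t₀ '' A) < ε} := by
      intro a ha
      have hmem : T t₀ a ∈ T t₀ '' A := ⟨a, ha, rfl⟩
      show EMetric.infEdist (T t₀ a) (T t₀ '' A) < ε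
      exact lt_of_eq_of_lt (EMetric.infEdist_zero_of_mem hmem) hε
    obtain ⟨δ, hδpos, hδ⟩ := hAcomp.exists_thickening_subset_open hUopen hAU
    refine ⟨ENNReal.ofReal δ, by simpa using hδpos, fun y hy => ?_⟩
    exact hδ (Metric.mem_thickening_iff_infEdist_lt.mpr hy)
  -- for each `t₀ ≥ 0`, the set `T t₀ '' A` attracts every bounded set
  have hCatt : ∀ t₀ : ℝ, 0 ≤ t₀ → ∀ B : Set X, B.Nonempty → IsBounded B →
      AttractsY S ι (T t₀ '' A) B := by
    intro t₀ ht₀ B hBne hBbdd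
    refine ENNReal.tendsto_nhds_zero.mpr fun ε hε => ?_
    obtain ⟨δ, hδpos, hδ⟩ := hucont t₀ ht₀ ε hε
    obtain ⟨t₁, ht₁0, ht₁⟩ := hS.2.2 B hBne hBbdd
    have hattB : Tendsto (fun t : ℝ => eSemidistY ι (mImage S t B) A) atTop (𝓝 0) :=
      hAatt B hBne hBbdd
    have hev : ∀ᶠ t : ℝ in atTop, eSemidistY ι (mImage S t B) A < δ :=
      hattB.eventually (eventually_iff.mpr (Iio_mem_nhds hδpos))
    obtain ⟨M, hM⟩ := eventually_atTop.mp hev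
    refine eventually_atTop.mpr ⟨t₀ + max M t₁, fun r hr => ?_⟩
    set t := r - t₀ with htdef
    have htM : M ≤ t := by
      have := le_max_left M t₁; simp only [htdef]; linarith
    have htt₁ : t₁ ≤ t := by
      have := le_max_right M t₁; simp only [htdef]; linarith
    have hrt : t₀ + t = r := by simp [htdef]
    have hincl : mImage S (t₀ + t) B ⊆ mImage S t₀ (mImage S t B) :=
      ht₁ t htt₁ t₀ ht₀
    show eSemidistY ι (mImage S r B) (T t₀ '' A) ≤ ε
    refine iSup₂_le fun x hx => ?_
    have hx' : x ∈ mImage S t₀ (mImage S t B) := by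
      apply hincl; rwa [hrt]
    obtain ⟨z, hz, hxz⟩ := Set.mem_iUnion₂.mp hx'
    have hzlt : (⨅ y ∈ ι ⁻¹' {z}, EMetric.infEdist y A) < δ := by
      refine lt_of_le_of_lt ?_ (hM t htM)
      exact le_biSup (fun x => ⨅ y ∈ ι ⁻¹' {x}, EMetric.infEdist y A) hz
    obtain ⟨y, hy⟩ := iInf_lt_iff.mp hzlt
    by_cases hyP : y ∈ ι ⁻¹' {z}
    · rw [iInf_pos hyP] at hy
      have hιy : ι y = z := hyP
      rw [← hιy, hT t₀ ht₀ y] at hxz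
      have hxeq : x = ι (T t₀ y) := hxz
      have hmem : T t₀ y ∈ ι ⁻¹' {x} := by simp [hxeq]
      refine le_trans (iInf₂_le (T t₀ y) hmem) ?_
      exact (hδ y hy).le
    · rw [iInf_neg hyP] at hy
      exact absurd hy not_top_lt
  -- minimality: `A ⊆ T t₀ '' A` for every `t₀ ≥ 0`
  have hsub : ∀ t₀ : ℝ, 0 ≤ t₀ → A ⊆ T t₀ '' A := by
    intro t₀ ht₀
    exact hAmin _ (hAcomp.image (hTcont t₀ ht₀)).isClosed (hCatt t₀ ht₀)
  -- forward invariance: `T t₀ '' A ⊆ A` for every `t₀ ≥ 0`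
  have hfwd : ∀ t₀ : ℝ, 0 ≤ t₀ → ∀ w ∈ A, T t₀ w ∈ A := by
    intro t₀ ht₀ w hw
    have hιA_ne : (ι '' A).Nonempty := hAne.image ι
    have hιA_bdd : IsBounded (ι '' A) := (hAcomp.image hι_cont).isBounded
    have hatt : Tendsto (fun t : ℝ => eSemidistY ι (mImage S t (ι '' A)) A)
        atTop (𝓝 0) := hAatt (ι '' A) hιA_ne hιA_bdd
    have hle : ∀ r : ℝ, t₀ ≤ r →
        EMetric.infEdist (T t₀ w) A ≤ eSemidistY ι (mImage S r (ι '' A)) A := by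
      intro r hr
      obtain ⟨w', hw', hww'⟩ := hsub (r - t₀) (by linarith) hw
      have h := hTsemi t₀ ht₀ (r - t₀) (by linarith) w'
      rw [hww'] at h
      have h2 : t₀ + (r - t₀) = r := by ring
      rw [h2] at h
      -- h : T r w' = T t₀ w
      have hx : ι (T t₀ w) ∈ mImage S r (ι '' A) := by
        refine Set.mem_iUnion₂.mpr ⟨ι w', ⟨w', hw', rfl⟩, ?_⟩
        rw [hT r (le_trans ht₀ hr) w', h]
        exact rfl
      refine le_trans ?_ (le_biSup _ hx)
      refine le_iInf₂ fun y hy => ?_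
      have hyy : y = T t₀ w := hι_inj hy
      rw [hyy]
    have h0 : EMetric.infEdist (T t₀ w) A ≤ 0 :=
      ge_of_tendsto hatt (eventually_atTop.mpr ⟨t₀, hle⟩)
    have hcl : T t₀ w ∈ closure A :=
      EMetric.mem_closure_iff_infEdist_zero.mpr (le_antisymm h0 zero_le)
    rwa [hAcomp.isClosed.closure_eq] at hcl
  -- construct the backward orbit and the eternal trajectory
  intro v hv τ
  have hsurj1 : ∀ p : {a : Y // a ∈ A}, ∃ q : {a : Y // a ∈ A}, T 1 q.1 = p.1 := by
    intro p
    obtain ⟨w, hw, hw'⟩ := hsub 1 zero_le_one p.2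
    exact ⟨⟨w, hw⟩, hw'⟩
  choose F hF using hsurj1
  set g : ℕ → Y := fun n => ((F^[n]) ⟨v, hv⟩).1 with hgdef
  have hgA : ∀ n, g n ∈ A := fun n => ((F^[n]) ⟨v, hv⟩).2
  have hg0 : g 0 = v := rfl
  have hgstep : ∀ n, T 1 (g (n + 1)) = g n := by
    intro n
    have h := hF ((F^[n]) ⟨v, hv⟩)
    simpa [hgdef, Function.iterate_succ_apply'] using h
  have hgiter : ∀ n k : ℕ, g n = T (k : ℝ) (g (n + k)) := by
    intro n k
    induction k with
    | zero => simp [hT0]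
    | succ k ih =>
      have h := hTsemi (k : ℝ) (Nat.cast_nonneg k) 1 zero_le_one (g (n + k + 1))
      rw [hgstep (n + k)] at h
      have hc : ((k + 1 : ℕ) : ℝ) = (k : ℝ) + 1 := by push_cast; ring
      rw [hc]
      show g n = T ((k : ℝ) + 1) (g (n + k + 1))
      rw [h]
      exact ih
  have hgiter' : ∀ m n : ℕ, n ≤ m → g n = T ((m - n : ℕ) : ℝ) (g m) := by
    intro m n hnm
    have h := hgiter n (m - n)
    rwa [Nat.add_sub_cancel' hnm] at h
  have hkey : ∀ s : ℝ, ∀ m N : ℕ, m ≤ N → τ - s ≤ (m : ℝ) →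
      T (s - τ + m) (g m) = T (s - τ + N) (g N) := by
    intro s m N hmN hms
    rw [hgiter' N m hmN,
      ← hTsemi (s - τ + m) (by linarith) ((N - m : ℕ) : ℝ) (Nat.cast_nonneg _) (g N)]
    congr 1
    rw [Nat.cast_sub hmN]
    ring
  set u : ℝ → Y := fun s => T (s - τ + (⌈τ - s⌉₊ : ℝ)) (g ⌈τ - s⌉₊) with hudef
  have hceil : ∀ s : ℝ, τ - s ≤ (⌈τ - s⌉₊ : ℝ) := fun s => Nat.le_ceil _
  have hu : ∀ s : ℝ, ∀ m : ℕ, τ - s ≤ (m : ℝ) → u s = T (s - τ + m) (g m) := by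
    intro s m hm
    have h1 := hkey s ⌈τ - s⌉₊ (max m ⌈τ - s⌉₊) (le_max_right _ _) (hceil s)
    have h2 := hkey s m (max m ⌈τ - s⌉₊) (le_max_left _ _) hm
    rw [hudef]
    exact h1.trans h2.symm
  refine ⟨u, ?_, ?_, ?_, ?_, ?_⟩
  · -- eternal trajectory
    intro t s hts
    show ι (u s) ∈ S (s - t) (ι (u t))
    rw [hT (s - t) (by linarith) (u t)]
    have hmt : τ - t ≤ ((⌈τ - t⌉₊ : ℕ) : ℝ) := hceil t
    have hms : τ - s ≤ ((⌈τ - t⌉₊ : ℕ) : ℝ) := by linarith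
    have hut : u t = T (t - τ + (⌈τ - t⌉₊ : ℝ)) (g ⌈τ - t⌉₊) := hu t _ hmt
    have hus : u s = T (s - τ + (⌈τ - t⌉₊ : ℝ)) (g ⌈τ - t⌉₊) := hu s _ hms
    have h := hTsemi (s - t) (by linarith) (t - τ + (⌈τ - t⌉₊ : ℝ)) (by linarith)
      (g ⌈τ - t⌉₊)
    rw [← hut] at h
    have harg : s - t + (t - τ + (⌈τ - t⌉₊ : ℝ)) = s - τ + (⌈τ - t⌉₊ : ℝ) := by ring
    rw [harg] at h
    rw [hus, ← h]
    exact Set.mem_singleton _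
  · -- value at `τ`
    have h := hu τ 0 (by simp)
    have harg : τ - τ + ((0 : ℕ) : ℝ) = 0 := by simp
    rw [harg] at h
    rw [h, hg0, hT0]
  · -- the trajectory stays in `A`
    intro s
    have h := hu s ⌈τ - s⌉₊ (hceil s)
    rw [h]
    exact hfwd _ (by have := hceil s; linarith) _ (hgA _)
  · -- `Y`-bounded
    refine hAbdd.subset ?_
    rintro _ ⟨s, rfl⟩
    have h := hu s ⌈τ - s⌉₊ (hceil s)
    rw [h]
    exact hfwd _ (by have := hceil s; linarith) _ (hgA _)
  · -- `X`-bounded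
    refine (hAcomp.image hι_cont).isBounded.subset ?_
    rintro _ ⟨s, rfl⟩
    refine ⟨u s, ?_, rfl⟩
    have h := hu s ⌈τ - s⌉₊ (hceil s)
    rw [h]
    exact hfwd _ (by have := hceil s; linarith) _ (hgA _)
end

section
/- Let {S(t)}_{t≥0} be a multivalued eventual semiflow on X which is (X,Y)-dissipative with bounded set B₀ ∈ B(Y). Then every eternal X-bounded trajectory u : ℝ → X satisfies u(t) ∈ B₀ for every t ∈ ℝ; in particular, u is Y-bounded. -/
open Set Filter Topology Bornology ENNReal

/-- **Eternal bounded trajectories lie in the absorbing set.**  If `S` is an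
`(X,Y)`-dissipative multivalued eventual semiflow with bounded absorbing set
`B₀ ∈ 𝓑(Y)`, then every eternal `X`-bounded trajectory `u : ℝ → X` satisfies
`u(t) ∈ B₀` for every `t ∈ ℝ`; in particular `u` is `Y`-bounded. -/
theorem eternal_trajectory_in_absorbing
    {X Y : Type*} [MetricSpace X] [MetricSpace Y]
    (ι : Y → X) (hι_cont : Continuous ι) (hι_inj : Function.Injective ι)
    (S : ℝ → X → Set X) (hS : IsEventualSemiflow S)
    (B₀ : Set Y) (hB₀ne : B₀.Nonempty) (hB₀bdd : IsBounded B₀)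
    (hdiss : IsDissipativeInto S ι B₀) :
    ∀ u : ℝ → X, IsEternalTrajectory S u → IsBounded (Set.range u) →
      (∀ t : ℝ, u t ∈ ι '' B₀) ∧
      ∃ w : ℝ → Y, (∀ t : ℝ, ι (w t) = u t) ∧ IsBounded (Set.range w) := by
  intro u hu hbdd
  obtain ⟨t₀, ht₀, habs⟩ := hdiss (Set.range u) (Set.range_nonempty u) hbdd
  have key : ∀ τ : ℝ, u τ ∈ ι '' B₀ := by
    intro τ
    have h1 : u τ ∈ mImage S (t₀ + 1) (Set.range u) := by
      have h2 := hu (τ - (t₀ + 1)) τ (by linarith)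
      simp only [mImage]
      refine Set.mem_iUnion₂.2 ⟨u (τ - (t₀ + 1)), Set.mem_range_self _, ?_⟩
      simpa [sub_sub_cancel] using h2
    exact habs (t₀ + 1) (by linarith) h1
  refine ⟨key, ?_⟩
  choose w hwB hw using fun t => (key t)
  exact ⟨w, hw, (Bornology.IsBounded.subset hB₀bdd (Set.range_subset_iff.mpr hwB))⟩
end
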